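/- For the evaluation-context grammar e ::= [] | let x = e in t | letpar x = t in e, any two decompositions of the same term t as t = e₁[s₁] = e₂[s₂] are related in one of four ways: e₁[s₁] is a subfocus of e₂[s₂], or e₂[s₂] is a subfocus of e₁[s₁], or the two focuses are branched (they lie in the binding and body, respectively, of a common parallel let), or branched in the other order. -/
import Mathlib


/-- Let-binding modes: sequential or parallel. -/
inductive Mode where
  | seq
  | par
deriving DecidableEq

/-- Terms: variables and (sequential or parallel) let-bindings
`let_m x = s in t` (binders are anonymous: the bound variable is implicit). -/
inductive Term where
  | var (x : ℕ)
  | app (x y : ℕ)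
  | letb (m : Mode) (s t : Term)
deriving DecidableEq

/-- Evaluation contexts: `e ::= [] | let_m x = e in t | letpar x = t in e`. -/
inductive ECtx where
  | hole
  | letE (m : Mode) (e : ECtx) (t : Term)
  | letB (t : Term) (e : ECtx)
deriving DecidableEq

/-- Plug a term into an evaluation context. -/
def ECtx.plug : ECtx → Term → Term
  | .hole, s => s
  | .letE m e t, s => .letb m (e.plug s) t
  | .letB t e, s => .letb .par t (e.plug s)

/-- Compose evaluation contexts: `(e₁.comp e₂).plug s = e₁.plug (e₂.plug s)`. -/
def ECtx.comp : ECtx → ECtx → ECtx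
  | .hole, e => e
  | .letE m e' t, e => .letE m (e'.comp e) t
  | .letB t e', e => .letB t (e'.comp e)

/-- `e₁[s₁]` is a subfocus of `e₂[s₂]`: there is `e` with `s₁ = e[s₂]` and
`e₂ = e₁[e]`. -/
def Subfocus (e₁ : ECtx) (s₁ : Term) (e₂ : ECtx) (s₂ : Term) : Prop :=
  ∃ e : ECtx, s₁ = e.plug s₂ ∧ e₂ = e₁.comp e

/-- `e₁[s₁]` and `e₂[s₂]` are branched focuses: they lie in the binding and
the body, respectively, of a common parallel let. -/
def Branched (e₁ : ECtx) (s₁ : Term) (e₂ : ECtx) (s₂ : Term) : Prop :=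
  ∃ (e e₁' e₂' : ECtx),
    e₁ = e.comp (.letE .par e₁' (e₂'.plug s₂)) ∧
    e₂ = e.comp (.letB (e₁'.plug s₁) e₂')

theorem analyze_focus (e₁ e₂ : ECtx) (s₁ s₂ : Term)
    (h : e₁.plug s₁ = e₂.plug s₂) :
    Subfocus e₁ s₁ e₂ s₂ ∨ Subfocus e₂ s₂ e₁ s₁ ∨
    Branched e₁ s₁ e₂ s₂ ∨ Branched e₂ s₂ e₁ s₁ := by
  induction e₁ generalizing e₂ with
  | hole =>
    exact Or.inl ⟨e₂, h, rfl⟩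
  | letE m e t ih =>
    cases e₂ with
    | hole => exact Or.inr (Or.inl ⟨.letE m e t, h.symm, rfl⟩)
    | letE m' e' t' =>
      simp only [ECtx.plug, Term.letb.injEq] at h
      obtain ⟨hm, hp, ht⟩ := h
      subst hm; subst ht
      rcases ih e' hp with ⟨c, h1, h2⟩ | ⟨c, h1, h2⟩ | ⟨c, c1, c2, h1, h2⟩ | ⟨c, c1, c2, h1, h2⟩
      · exact Or.inl ⟨c, h1, by simp [ECtx.comp, h2]⟩
      · exact Or.inr (Or.inl ⟨c, h1, by simp [ECtx.comp, h2]⟩)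
      · exact Or.inr (Or.inr (Or.inl ⟨.letE m c t, c1, c2, by simp [ECtx.comp, h1, h2]⟩))
      · exact Or.inr (Or.inr (Or.inr ⟨.letE m c t, c1, c2, by simp [ECtx.comp, h1, h2]⟩))
    | letB t' e' =>
      simp only [ECtx.plug, Term.letb.injEq] at h
      obtain ⟨hm, hp, ht⟩ := h
      subst hm; subst ht; subst hp
      exact Or.inr (Or.inr (Or.inl ⟨.hole, e, e', rfl, rfl⟩))
  | letB t e ih =>
    cases e₂ with
    | hole => exact Or.inr (Or.inl ⟨.letB t e, h.symm, rfl⟩)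
    | letE m' e' t' =>
      simp only [ECtx.plug, Term.letb.injEq] at h
      obtain ⟨hm, hp, ht⟩ := h
      subst ht; subst hp
      cases hm
      exact Or.inr (Or.inr (Or.inr ⟨.hole, e', e, rfl, rfl⟩))
    | letB t' e' =>
      simp only [ECtx.plug, Term.letb.injEq] at h
      obtain ⟨-, ht, hp⟩ := h
      subst ht
      rcases ih e' hp with ⟨c, h1, h2⟩ | ⟨c, h1, h2⟩ | ⟨c, c1, c2, h1, h2⟩ | ⟨c, c1, c2, h1, h2⟩
      · exact Or.inl ⟨c, h1, by simp [ECtx.comp, h2]⟩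
      · exact Or.inr (Or.inl ⟨c, h1, by simp [ECtx.comp, h2]⟩)
      · exact Or.inr (Or.inr (Or.inl ⟨.letB t c, c1, c2, by simp [ECtx.comp, h1, h2]⟩))
      · exact Or.inr (Or.inr (Or.inr ⟨.letB t c, c1, c2, by simp [ECtx.comp, h1, h2]⟩))
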